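/- Let f : ℤ₊ → [0,1] be a non-increasing log-concave probability mass function on the non-negative integers. Then sup_{k ≥ 0} (k+1) f(k) > 1/e. -/

import Mathlib

open Real Filter

/-- The function `y ↦ y^n - y^(n+1) = (1-y) y^n` is antitone on `[n/(n+1), 1]`. -/
private lemma antiAux (n : ℕ) :
    AntitoneOn (fun y : ℝ => y ^ n - y ^ (n + 1)) (Set.Icc ((n : ℝ) / ((n : ℝ) + 1)) 1) := by
  apply antitoneOn_of_deriv_nonpos (convex_Icc _ _)
  · exact ((continuous_pow n).sub (continuous_pow (n + 1))).continuousOn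
  · exact ((differentiable_pow n).sub (differentiable_pow (n + 1))).differentiableOn
  · intro x hx
    rw [interior_Icc] at hx
    have h := ((hasDerivAt_pow n x).sub (hasDerivAt_pow (n + 1) x)).deriv
    rw [show (fun y : ℝ => y ^ n - y ^ (n + 1)) = ((fun x : ℝ => x ^ n) - fun x : ℝ => x ^ (n + 1)) from rfl, h]
    simp only [Nat.add_sub_cancel]
    rcases n with _ | m
    · norm_num
    · simp only [Nat.add_sub_cancel]
      have hn1 : (0:ℝ) < ((m:ℝ) + 1) + 1 := by positivity
      have h1 := hx.1
      push_cast at h1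
      rw [div_lt_iff₀ hn1] at h1
      push_cast
      have hx0 : 0 < x := by nlinarith
      have hp : (0:ℝ) ≤ x ^ m := by positivity
      have hps : x ^ (m + 1) = x ^ m * x := pow_succ x m
      rw [hps]
      nlinarith [mul_le_mul_of_nonneg_right (le_of_lt h1) hp]

/-- Core analytic lemma. -/
private lemma coreLemma (n : ℕ) (x t : ℝ) (hx0 : 0 ≤ x) (hx1 : x < 1)
    (ht : 1 / Real.exp 1 < t) (htx : t * x ≤ 1 / Real.exp 1)
    (hxt : x ^ n ≤ t) : 1 / Real.exp 1 < ((n : ℝ) + 1) * ((1 - x) * t) := by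
  have hn1 : (0:ℝ) < (n:ℝ) + 1 := by positivity
  have htpos : 0 < t := lt_trans (by positivity) ht
  by_cases hc : 1 ≤ ((n:ℝ) + 1) * (1 - x)
  · calc 1 / Real.exp 1 < t := ht
      _ = 1 * t := (one_mul t).symm
      _ ≤ (((n:ℝ) + 1) * (1 - x)) * t := mul_le_mul_of_nonneg_right hc htpos.le
      _ = ((n:ℝ) + 1) * ((1 - x) * t) := by ring
  · push_neg at hc
    set s : ℝ := 1 / ((n:ℝ) + 1) with hs
    have hs0 : 0 < s := by positivity
    have hns : ((n:ℝ) + 1) * s = 1 := by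
      rw [hs]; field_simp
    have hnfrac : (n:ℝ) / ((n:ℝ) + 1) = 1 - s := by
      rw [hs]; field_simp; ring
    have hxlow : (n:ℝ) / ((n:ℝ) + 1) < x := by
      rw [div_lt_iff₀ hn1]; nlinarith
    set b : ℝ := Real.exp (-s) with hb
    have hbpos : 0 < b := Real.exp_pos _
    have hb1 : b < 1 := by
      rw [hb, Real.exp_lt_one_iff]; linarith
    have hcast : ((n:ℝ) + 1) = ((n + 1 : ℕ) : ℝ) := by push_cast; ring
    have hbn1 : b ^ (n + 1) = 1 / Real.exp 1 := by
      rw [hb, ← Real.exp_nat_mul]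
      have : ((n + 1 : ℕ) : ℝ) * (-s) = -1 := by
        rw [← hcast]; nlinarith
      rw [this, Real.exp_neg, one_div]
    have hxpow : x ^ (n + 1) ≤ 1 / Real.exp 1 := by
      calc x ^ (n + 1) = x ^ n * x := pow_succ x n
        _ ≤ t * x := mul_le_mul_of_nonneg_right hxt hx0
        _ ≤ _ := htx
    have hxb : x ≤ b := by
      apply le_of_pow_le_pow_left₀ (Nat.succ_ne_zero n) hbpos.le
      rw [hbn1]; exact hxpow
    have hblow : (n:ℝ) / ((n:ℝ) + 1) ≤ b := by
      rw [hnfrac, hb]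
      have := Real.add_one_lt_exp (show -s ≠ 0 by linarith)
      linarith
    have hmid : b ^ n - b ^ (n + 1) ≤ x ^ n - x ^ (n + 1) :=
      antiAux n (Set.mem_Icc.mpr ⟨hxlow.le, hx1.le⟩) (Set.mem_Icc.mpr ⟨hblow, hb1.le⟩) hxb
    have hlast : 1 / Real.exp 1 < ((n:ℝ) + 1) * (b ^ n - b ^ (n + 1)) := by
      have hbn : b ^ n = Real.exp (-1) * Real.exp s := by
        rw [hb, ← Real.exp_nat_mul, ← Real.exp_add]
        congr 1
        nlinarith
      have he1 : 1 + s < Real.exp s := by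
        have := Real.add_one_lt_exp (ne_of_gt hs0); linarith
      have hbn1' : b ^ (n + 1) = Real.exp (-1) := by
        rw [hbn1, Real.exp_neg, one_div]
      have heps : 1 / Real.exp 1 = Real.exp (-1) := by rw [Real.exp_neg, one_div]
      rw [hbn, hbn1', heps]
      have hep : 0 < Real.exp (-1) := Real.exp_pos _
      have h2 : 1 < ((n:ℝ) + 1) * (Real.exp s - 1) := by nlinarith
      nlinarith [mul_lt_mul_of_pos_left h2 hep]
    calc 1 / Real.exp 1 < ((n:ℝ) + 1) * (b ^ n - b ^ (n + 1)) := hlast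
      _ ≤ ((n:ℝ) + 1) * (x ^ n - x ^ (n + 1)) := mul_le_mul_of_nonneg_left hmid hn1.le
      _ = ((n:ℝ) + 1) * ((1 - x) * x ^ n) := by rw [pow_succ]; ring
      _ ≤ ((n:ℝ) + 1) * ((1 - x) * t) := by
          apply mul_le_mul_of_nonneg_left _ hn1.le
          exact mul_le_mul_of_nonneg_left hxt (by linarith)

/-- For a non-increasing log-concave pmf `f` on `ℤ₊`:
`sup_{k ≥ 0} (k+1) f(k) > 1/e`. -/
theorem sup_weighted_pmf_gt_inv_e (f : ℕ → ℝ)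
    (h0 : ∀ k, 0 ≤ f k) (h1 : ∀ k, f k ≤ 1) (hsum : ∑' k : ℕ, f k = 1)
    (hmono : ∀ k : ℕ, f (k + 1) ≤ f k)
    (hlc : ∀ k : ℕ, f k * f (k + 2) ≤ f (k + 1) ^ 2) :
    1 / Real.exp 1 < ⨆ k : ℕ, ((k : ℝ) + 1) * f k := by
  classical
  have hS : Summable f := by
    by_contra h
    rw [tsum_eq_zero_of_not_summable h] at hsum
    norm_num at hsum
  have hanti : Antitone f := antitone_nat_of_succ_le hmono
  have hSn : ∀ n : ℕ, Summable (fun j => f (j + n)) :=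
    fun n => (summable_nat_add_iff n).mpr hS
  set T : ℕ → ℝ := fun n => ∑' j, f (j + n) with hTdef
  have hTn : ∀ n, T n = ∑' j, f (j + n) := fun n => rfl
  have hT0 : T 0 = 1 := by
    rw [hTn]; simpa using hsum
  have hTrec : ∀ n, T n = f n + T (n + 1) := by
    intro n
    rw [hTn n, hTn (n + 1), Summable.tsum_eq_zero_add (hSn n)]
    congr 1
    · norm_num
    · apply tsum_congr
      intro j
      congr 1
      omega
  have hTnonneg : ∀ n, 0 ≤ T n := fun n => tsum_nonneg fun j => h0 _
  -- ratio lemma from log-concavity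
  have hRaux : ∀ d a : ℕ, f a * f (a + d + 1) ≤ f (a + 1) * f (a + d) := by
    intro d
    induction d with
    | zero =>
        intro a
        simpa using le_of_eq (mul_comm (f a) (f (a + 1)))
    | succ d ih =>
        intro a
        have hidx1 : a + (d + 1) + 1 = a + d + 2 := by omega
        have hidx2 : a + (d + 1) = a + d + 1 := by omega
        rw [hidx1, hidx2]
        rcases eq_or_lt_of_le (h0 (a + d + 1)) with hz | hpos
        · have h2z : f (a + d + 2) = 0 := by
            have hle : f (a + d + 1 + 1) ≤ f (a + d + 1) := hmono (a + d + 1)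
            have hidx3 : a + d + 1 + 1 = a + d + 2 := by omega
            rw [hidx3, ← hz] at hle
            exact le_antisymm hle (h0 _)
          rw [h2z, ← hz]
          simp [mul_nonneg (h0 a) (h0 (a + d + 2))]
        · have hfd : 0 < f (a + d) := lt_of_lt_of_le hpos (hmono (a + d))
          have hlc' := hlc (a + d)
          have ih' := ih a
          rw [← mul_le_mul_iff_right₀ hfd]
          nlinarith [mul_le_mul_of_nonneg_left hlc' (h0 a),
            mul_le_mul_of_nonneg_right ih' (h0 (a + d + 1))]
  -- spread lemma
  have hM : ∀ p a d : ℕ, a + p ≤ d → f a * f (d + p) ≤ f (a + p) * f d := by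
    intro p
    induction p with
    | zero =>
        intro a d _
        simp only [Nat.add_zero]
        exact le_refl _
    | succ p ih =>
        intro a d h
        have hR1 : f a * f (d + p + 1) ≤ f (a + 1) * f (d + p) := by
          obtain ⟨e, he⟩ := Nat.exists_eq_add_of_le (show a ≤ d + p by omega)
          rw [he]
          exact hRaux e a
        have hih := ih (a + 1) d (by omega)
        have hfin : f a * f (d + (p + 1)) ≤ f (a + 1 + p) * f d := by
          have h1 : d + (p + 1) = d + p + 1 := by omega
          rw [h1]
          exact le_trans hR1 hih
        have h2 : a + 1 + p = a + (p + 1) := by omega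
        rwa [h2] at hfin
  -- key inequality (C): T n * (f n - f (n+1)) ≤ f n ^ 2
  have hC : ∀ n, T n * (f n - f (n + 1)) ≤ f n ^ 2 := by
    intro n
    have key : ∀ j : ℕ, f (j + n) * (f n - f (n + 1)) ≤ f n * (f (j + n) - f (j + (n + 1))) := by
      intro j
      obtain ⟨e, he⟩ := Nat.exists_eq_add_of_le (Nat.le_add_left n j)
      have hr := hRaux e n
      have h1 : j + (n + 1) = n + e + 1 := by omega
      rw [h1, he]
      nlinarith [hr]
    have s1 : Summable (fun j => f (j + n) * (f n - f (n + 1))) := (hSn n).mul_right _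
    have s2 : Summable (fun j => f n * (f (j + n) - f (j + (n + 1)))) :=
      ((hSn n).sub (hSn (n + 1))).mul_left _
    have h1 := Summable.tsum_le_tsum key s1 s2
    rw [tsum_mul_right, tsum_mul_left, Summable.tsum_sub (hSn n) (hSn (n + 1))] at h1
    rw [← hTn n, ← hTn (n + 1)] at h1
    have hrec := hTrec n
    have h2 : T n - T (n + 1) = f n := by linarith
    rw [h2] at h1
    rw [sq]
    exact h1
  -- tail log-concavity consequence
  have hKT : ∀ j n : ℕ, j ≤ n → T j * T (n + 1) ≤ T (j + 1) * T n := by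
    intro j n hjn
    have key : ∀ i : ℕ, f j * f (i + (n + 1)) ≤ f n * f (i + (j + 1)) := by
      intro i
      by_cases hcase : n ≤ j + 1 + i
      · have h := hM (n - j) j (i + j + 1) (by omega)
        have e1 : i + j + 1 + (n - j) = i + (n + 1) := by omega
        have e2 : j + (n - j) = n := by omega
        have e3 : i + j + 1 = i + (j + 1) := by omega
        rw [e1, e2, e3] at h
        exact h
      · have h := hM (i + 1) j n (by omega)
        have e1 : n + (i + 1) = i + (n + 1) := by omega
        have e2 : j + (i + 1) = i + (j + 1) := by omega
        rw [e1, e2] at h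
        exact le_trans h (le_of_eq (mul_comm _ _))
    have s1 : Summable (fun i => f j * f (i + (n + 1))) := (hSn (n + 1)).mul_left _
    have s2 : Summable (fun i => f n * f (i + (j + 1))) := (hSn (j + 1)).mul_left _
    have h1 := Summable.tsum_le_tsum key s1 s2
    rw [tsum_mul_left, tsum_mul_left, ← hTn (n + 1), ← hTn (j + 1)] at h1
    have hj := hTrec j
    have hn := hTrec n
    rw [hj, hn]
    nlinarith [h1]
  have hεpos : 0 < 1 / Real.exp 1 := by positivity
  have hε1 : 1 / Real.exp 1 < 1 := by
    rw [div_lt_one (Real.exp_pos 1)]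
    have := Real.add_one_lt_exp (show (1:ℝ) ≠ 0 by norm_num)
    linarith
  have hTtend : Filter.Tendsto T Filter.atTop (nhds 0) := by
    have e : ∀ n, T n = 1 - ∑ i ∈ Finset.range n, f i := by
      intro n
      have h := Summable.sum_add_tsum_nat_add (f := f) n hS
      rw [hsum] at h
      rw [hTn]
      linarith
    have h1 : Filter.Tendsto (fun n => ∑ i ∈ Finset.range n, f i) Filter.atTop (nhds 1) := by
      have := hS.hasSum.tendsto_sum_nat
      rwa [hsum] at this
    have h2 : Filter.Tendsto (fun n => 1 - ∑ i ∈ Finset.range n, f i) Filter.atTop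
        (nhds (1 - 1)) := Filter.Tendsto.sub tendsto_const_nhds h1
    norm_num at h2
    exact h2.congr (fun n => (e n).symm)
  have hex : ∃ n, T n ≤ 1 / Real.exp 1 := by
    obtain ⟨n, hn⟩ := (hTtend.eventually_lt_const hεpos).exists
    exact ⟨n, hn.le⟩
  have hfind0 : Nat.find hex ≠ 0 := by
    intro h
    have hspec := Nat.find_spec hex
    rw [h, hT0] at hspec
    linarith
  obtain ⟨n, hn⟩ := Nat.exists_eq_succ_of_ne_zero hfind0
  have hTn1 : T (n + 1) ≤ 1 / Real.exp 1 := by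
    have := Nat.find_spec hex
    rwa [hn] at this
  have hTngt : 1 / Real.exp 1 < T n := by
    have h := Nat.find_min hex (show n < Nat.find hex by omega)
    exact not_le.mp h
  have hTnpos : 0 < T n := lt_trans hεpos hTngt
  have hfn : 0 < f n := by
    rcases eq_or_lt_of_le (h0 n) with hz | hp
    · exfalso
      have hall : ∀ j : ℕ, f (j + n) = 0 := by
        intro j
        have h1 : f (j + n) ≤ f n := hanti (Nat.le_add_left n j)
        have h2 := h0 (j + n)
        rw [← hz] at h1
        linarith
      have hzero : T n = 0 := by
        rw [hTn]
        simp [hall]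
      linarith
    · exact hp
  set x : ℝ := T (n + 1) / T n with hx
  have hx0 : 0 ≤ x := div_nonneg (hTnonneg _) hTnpos.le
  have hx1 : x < 1 := by
    rw [hx, div_lt_one hTnpos]
    have := hTrec n
    linarith
  have htx : T n * x ≤ 1 / Real.exp 1 := by
    rw [hx, mul_comm, div_mul_cancel₀ _ (ne_of_gt hTnpos)]
    exact hTn1
  have hxpow : x ^ n ≤ T n := by
    have haux : ∀ j, j ≤ n → x ^ j ≤ T j := by
      intro j
      induction j with
      | zero => intro _; rw [pow_zero, hT0]
      | succ j ih =>
          intro hj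
          have hjn : j ≤ n := by omega
          have h2 : x ^ j * x ≤ T j * x := mul_le_mul_of_nonneg_right (ih hjn) hx0
          have h3 : T j * x ≤ T (j + 1) := by
            rw [hx, mul_div_assoc']
            rw [div_le_iff₀ hTnpos]
            calc T j * T (n + 1) ≤ T (j + 1) * T n := hKT j n hjn
              _ = T (j + 1) * T n := rfl
          calc x ^ (j + 1) = x ^ j * x := pow_succ x j
            _ ≤ T j * x := h2
            _ ≤ T (j + 1) := h3
    exact haux n le_rfl
  have hcore := coreLemma n x (T n) hx0 hx1 hTngt htx hxpow
  have hfneq : (1 - x) * T n = f n := by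
    have hne : T n ≠ 0 := ne_of_gt hTnpos
    have hrec := hTrec n
    rw [hx]
    field_simp
    linarith
  rw [hfneq] at hcore
  have hbdd : BddAbove (Set.range fun k : ℕ => ((k : ℝ) + 1) * f k) := by
    refine ⟨1, ?_⟩
    rintro y ⟨k, rfl⟩
    have hsum' : ∑ j ∈ Finset.range (k + 1), f k ≤ ∑ j ∈ Finset.range (k + 1), f j :=
      Finset.sum_le_sum fun j hj => hanti (by
        have := Finset.mem_range.mp hj; omega)
    have hps : ∑ j ∈ Finset.range (k + 1), f j ≤ 1 := by
      rw [← hsum]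
      exact Summable.sum_le_tsum _ (fun i _ => h0 i) hS
    have hconst : ∑ j ∈ Finset.range (k + 1), f k = ((k : ℝ) + 1) * f k := by
      rw [Finset.sum_const, Finset.card_range, nsmul_eq_mul]
      push_cast
      ring
    calc ((k:ℝ) + 1) * f k = ∑ j ∈ Finset.range (k + 1), f k := hconst.symm
      _ ≤ ∑ j ∈ Finset.range (k + 1), f j := hsum'
      _ ≤ 1 := hps
  calc 1 / Real.exp 1 < ((n:ℝ) + 1) * f n := hcore
    _ ≤ ⨆ k : ℕ, ((k : ℝ) + 1) * f k := le_ciSup hbdd n
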